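/- Let p, q be distinct odd primes with gcd(p-1,q-1)=4 and E(X) the generating polynomial of the two-prime quaternary sequence of period pq. Then E(4) ≡ (p+3)/2 (mod 4^q - 1), and consequently gcd(E(4), (4^q-1)/3) = gcd(4^q - 1, p + 3). -/

import Mathlib

open Finset

private lemma geom3 (n : ℕ) : 3 * ∑ j ∈ range n, 4 ^ j + 1 = 4 ^ n := by
  induction n with
  | zero => simp
  | succ n ih => rw [Finset.sum_range_succ, pow_succ]; omega

private lemma modEq_sum {n : ℕ} {α : Type*} (s : Finset α) (f g : α → ℕ)
    (h : ∀ a ∈ s, f a ≡ g a [MOD n]) :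
    (∑ a ∈ s, f a) ≡ (∑ a ∈ s, g a) [MOD n] := by
  classical
  induction s using Finset.induction_on with
  | empty => rfl
  | insert _ _ hx ih =>
    rw [Finset.sum_insert hx, Finset.sum_insert hx]
    exact Nat.ModEq.add (h _ (Finset.mem_insert_self _ _))
      (ih fun a ha => h a (Finset.mem_insert_of_mem ha))

private lemma ne_zero_of_orderOf {r : ℕ} (hr : r.Prime) (x : ZMod r)
    (hx : orderOf x = r - 1) : x ≠ 0 := by
  haveI : Fact r.Prime := ⟨hr⟩
  rintro rfl
  have h1 : (0 : ZMod r) ^ orderOf (0 : ZMod r) = 1 := pow_orderOf_eq_one _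
  rw [hx, zero_pow (by have := hr.two_le; omega)] at h1
  exact zero_ne_one h1

private lemma exists_pow_eq {r : ℕ} (hr : r.Prime) (g : ZMod r)
    (hg : orderOf g = r - 1) (x : ZMod r) (hx : x ≠ 0) : ∃ a, g ^ a = x := by
  haveI : Fact r.Prime := ⟨hr⟩
  have hg0 : g ≠ 0 := ne_zero_of_orderOf hr g hg
  set gu : (ZMod r)ˣ := Units.mk0 g hg0 with hgu
  have hog : orderOf gu = r - 1 := by rw [← orderOf_units]; exact hg
  have hcard : Fintype.card (ZMod r)ˣ = r - 1 := ZMod.card_units r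
  have hinj : Set.InjOn (fun a => gu ^ a) ↑(range (r - 1)) := by
    intro a ha b hb hab
    simp only [Finset.coe_range, Set.mem_Iio] at ha hb
    have := pow_eq_pow_iff_modEq.mp hab
    rw [hog] at this
    exact Nat.ModEq.eq_of_lt_of_lt this ha hb
  have himg : (range (r - 1)).image (fun a => gu ^ a) = Finset.univ := by
    apply Finset.eq_of_subset_of_card_le (Finset.subset_univ _)
    rw [Finset.card_image_of_injOn hinj, Finset.card_range, Finset.card_univ, hcard]
  set xu : (ZMod r)ˣ := Units.mk0 x hx with hxu
  have : xu ∈ (range (r - 1)).image (fun a => gu ^ a) := himg ▸ Finset.mem_univ _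
  obtain ⟨a, _, ha⟩ := Finset.mem_image.mp this
  refine ⟨a, ?_⟩
  have := congrArg (Units.val) ha
  simpa [hgu, hxu] using this

private lemma pow_eq_pow_iff_field {r : ℕ} (hr : r.Prime) (g : ZMod r) (hg : g ≠ 0)
    {s t : ℕ} : g ^ s = g ^ t ↔ s ≡ t [MOD orderOf g] := by
  haveI : Fact r.Prime := ⟨hr⟩
  have h1 : orderOf (Units.mk0 g hg) = orderOf g := by rw [← orderOf_units]; rfl
  rw [← h1, ← pow_eq_pow_iff_modEq]
  constructor
  · intro hst; ext; simpa using hst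
  · intro hst; have := congrArg Units.val hst; simpa using this

private lemma sum_periodic_nat (f : ℕ → ℕ) (n : ℕ) (hf : ∀ s, f (s + n) = f s) :
    ∀ K, (∑ s ∈ range (K * n), f s) = K * ∑ s ∈ range n, f s := by
  have hshift : ∀ x c, f (x + c * n) = f x := by
    intro x c
    induction c with
    | zero => simp
    | succ c ih => rw [add_mul, one_mul, ← add_assoc, hf, ih]
  intro K
  induction K with
  | zero => simp
  | succ K ih =>
    rw [add_mul, one_mul, Finset.sum_range_add, ih, add_mul, one_mul]
    congr 1
    refine Finset.sum_congr rfl fun x _ => ?_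
    rw [add_comm (K * n) x, hshift]

theorem E_four_mod_q_part (p q g h : ℕ) (hp : p.Prime) (hq : q.Prime)
    (hop : Odd p) (hoq : Odd q) (hne : p ≠ q)
    (hgcd : Nat.gcd (p - 1) (q - 1) = 4)
    (hgp : orderOf (g : ZMod p) = p - 1)
    (hgq : orderOf (g : ZMod q) = q - 1)
    (hhp : h ≡ g [MOD p]) (hhq : h ≡ 1 [MOD q])
    (D : ℕ → Set (ZMod (p * q)))
    (hD : ∀ i, D i = {x : ZMod (p * q) | ∃ s < (p - 1) * (q - 1) / 4,
        x = (g : ZMod (p * q)) ^ s * (h : ZMod (p * q)) ^ i})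
    (e : ℕ → ℕ)
    (he2 : ∀ u < p * q, q ∣ u → e u = 2)
    (he0 : ∀ u < p * q, p ∣ u → ¬ q ∣ u → e u = 0)
    (heD : ∀ u < p * q, ∀ i < 4, (u : ZMod (p * q)) ∈ D i → e u = i) :
    (∑ u ∈ Finset.range (p * q), e u * 4 ^ u) ≡ (p + 3) / 2 [MOD 4 ^ q - 1] ∧
      Nat.gcd (∑ u ∈ Finset.range (p * q), e u * 4 ^ u) ((4 ^ q - 1) / 3) =
        Nat.gcd (4 ^ q - 1) (p + 3) := by
  classical
  haveI hfp : Fact p.Prime := ⟨hp⟩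
  haveI hfq : Fact q.Prime := ⟨hq⟩
  haveI : NeZero q := ⟨hq.pos.ne'⟩
  haveI : NeZero (p * q) := ⟨(Nat.mul_pos hp.pos hq.pos).ne'⟩
  obtain ⟨k, hk⟩ : ∃ k, p = 4 * k + 1 := by
    obtain ⟨k, hk⟩ := hgcd ▸ Nat.gcd_dvd_left (p - 1) (q - 1)
    exact ⟨k, by have := hp.two_le; omega⟩
  obtain ⟨m, hm⟩ : ∃ m, q = 4 * m + 1 := by
    obtain ⟨m, hm⟩ := hgcd ▸ Nat.gcd_dvd_right (p - 1) (q - 1)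
    exact ⟨m, by have := hq.two_le; omega⟩
  have hk1 : 1 ≤ k := by have := hp.two_le; omega
  have hm1 : 1 ≤ m := by have := hq.two_le; omega
  have hp1 : p - 1 = 4 * k := by omega
  have hq1 : q - 1 = 4 * m := by omega
  have hcop : Nat.Coprime p q := (Nat.coprime_primes hp hq).mpr hne
  have hgp0 : (g : ZMod p) ≠ 0 := ne_zero_of_orderOf hp _ hgp
  have hgq0 : (g : ZMod q) ≠ 0 := ne_zero_of_orderOf hq _ hgq
  have hpg : ¬ p ∣ g := fun hd => hgp0 ((ZMod.natCast_eq_zero_iff g p).mpr hd)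
  have hqg : ¬ q ∣ g := fun hd => hgq0 ((ZMod.natCast_eq_zero_iff g q).mpr hd)
  have hhzp : ((h : ℕ) : ZMod p) = (g : ZMod p) := (ZMod.natCast_eq_natCast_iff h g p).mpr hhp
  have hhzq : ((h : ℕ) : ZMod q) = 1 := by
    have := (ZMod.natCast_eq_natCast_iff h 1 q).mpr hhq
    simpa using this
  have hph : ¬ p ∣ h := fun hd => hgp0 (by rw [← hhzp]; exact (ZMod.natCast_eq_zero_iff h p).mpr hd)
  have hqh : ¬ q ∣ h := by
    intro hd
    have := (ZMod.natCast_eq_zero_iff h q).mpr hd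
    rw [hhzq] at this
    exact one_ne_zero this
  -- the exponent bound
  set L : ℕ := (p - 1) * (q - 1) / 4 with hLdef
  have hL4 : L = 4 * (k * m) := by
    rw [hLdef, hp1, hq1]
    have : (4 * k) * (4 * m) = 4 * (4 * (k * m)) := by ring
    rw [this, Nat.mul_div_cancel_left _ (by norm_num)]
  have hLk : L = k * (q - 1) := by rw [hL4, hq1]; ring
  have hLpos : 0 < L := by rw [hL4]; positivity
  have hp1L : (p - 1) ∣ L := by rw [hL4, hp1]; exact ⟨m, by ring⟩
  have hq1L : (q - 1) ∣ L := by rw [hL4, hq1]; exact ⟨k, by ring⟩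
  -- congruence modulo p*q splits
  have hsplitpq : ∀ a b : ℕ, a ≡ b [MOD p] → a ≡ b [MOD q] → a ≡ b [MOD p * q] :=
    fun a b h1 h2 => (Nat.modEq_and_modEq_iff_modEq_mul hcop).mp ⟨h1, h2⟩
  -- covering lemma
  have cover : ∀ u : ℕ, ¬ p ∣ u → ¬ q ∣ u → ∃ i < 4, (u : ZMod (p * q)) ∈ D i := by
    intro u hpu hqu
    obtain ⟨a, ha⟩ := exists_pow_eq hp (g : ZMod p) hgp (u : ZMod p)
      (fun h0 => hpu ((ZMod.natCast_eq_zero_iff u p).mp h0))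
    obtain ⟨b, hb⟩ := exists_pow_eq hq (g : ZMod q) hgq (u : ZMod q)
      (fun h0 => hqu ((ZMod.natCast_eq_zero_iff u q).mp h0))
    set i : ℕ := (a + 3 * b + 4) % 4 with hidef
    have hi4 : i < 4 := Nat.mod_lt _ (by norm_num)
    have hib : (i + b) % 4 = a % 4 := by omega
    set A : ℕ := a + 4 * (p - 1) - i with hA
    have hAi : A + i = a + 4 * (p - 1) := by omega
    have hAb : A ≡ b [MOD Nat.gcd (p - 1) (q - 1)] := by
      rw [hgcd]
      have h1 : (A + i) % 4 = (b + i) % 4 := by omega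
      exact Nat.ModEq.add_right_cancel' i h1
    obtain ⟨s₀, hs₀p, hs₀q⟩ := Nat.chineseRemainder' hAb
    set s : ℕ := s₀ % L with hsdef
    have hsL : s < L := Nat.mod_lt _ hLpos
    have hsp : s ≡ A [MOD p - 1] :=
      (Nat.ModEq.of_dvd hp1L (Nat.mod_modEq s₀ L)).trans hs₀p
    have hsq : s ≡ b [MOD q - 1] :=
      (Nat.ModEq.of_dvd hq1L (Nat.mod_modEq s₀ L)).trans hs₀q
    refine ⟨i, hi4, ?_⟩
    rw [hD i]
    refine ⟨s, hsL, ?_⟩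
    have hmp : u ≡ g ^ s * h ^ i [MOD p] := by
      have h1 : g ^ s * h ^ i ≡ g ^ s * g ^ i [MOD p] := (Nat.ModEq.refl _).mul (hhp.pow i)
      have h2 : (g : ZMod p) ^ (s + i) = (g : ZMod p) ^ a := by
        rw [pow_eq_pow_iff_field hp _ hgp0, hgp]
        have h3 : s + i ≡ A + i [MOD p - 1] := hsp.add_right i
        have h4 : A + i ≡ a [MOD p - 1] := by
          rw [hAi]
          have h5 : 4 * (p - 1) ≡ 0 [MOD p - 1] := (Nat.modEq_zero_iff_dvd).mpr ⟨4, mul_comm _ _⟩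
          simpa using (Nat.ModEq.refl a).add h5
        exact h3.trans h4
      have h5 : u ≡ g ^ (s + i) [MOD p] := by
        rw [← ZMod.natCast_eq_natCast_iff]
        push_cast
        rw [h2, ha]
      refine h5.trans ?_
      rw [pow_add]
      exact h1.symm
    have hmq : u ≡ g ^ s * h ^ i [MOD q] := by
      have h1 : g ^ s * h ^ i ≡ g ^ s * 1 ^ i [MOD q] := (Nat.ModEq.refl _).mul (hhq.pow i)
      have h2 : (g : ZMod q) ^ s = (g : ZMod q) ^ b := by
        rw [pow_eq_pow_iff_field hq _ hgq0, hgq]; exact hsq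
      have h5 : u ≡ g ^ s [MOD q] := by
        rw [← ZMod.natCast_eq_natCast_iff]
        push_cast
        rw [h2, hb]
      refine h5.trans ?_
      simpa using h1.symm
    have hfin := hsplitpq u (g ^ s * h ^ i) hmp hmq
    rw [← ZMod.natCast_eq_natCast_iff] at hfin
    rw [hfin]
    push_cast
    ring
  -- injectivity on exponents
  have hlcm : Nat.lcm (p - 1) (q - 1) = L := by
    have h3 := Nat.gcd_mul_lcm (p - 1) (q - 1)
    rw [hgcd] at h3
    rw [hL4]
    set KM := k * m with hKM
    have h4 : (p - 1) * (q - 1) = 16 * KM := by rw [hp1, hq1, hKM]; ring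
    rw [h4] at h3
    omega
  have injL : ∀ s₁ s₂ : ℕ, s₁ < L → s₂ < L → s₁ ≡ s₂ [MOD p - 1] → s₁ ≡ s₂ [MOD q - 1] → s₁ = s₂ := by
    have main2 : ∀ s₁ s₂ : ℕ, s₁ ≤ s₂ → s₂ < L → s₁ ≡ s₂ [MOD p - 1] → s₁ ≡ s₂ [MOD q - 1] → s₁ = s₂ := by
      intro s₁ s₂ hle hlt hP hQ
      have d := Nat.lcm_dvd ((Nat.modEq_iff_dvd' hle).mp hP) ((Nat.modEq_iff_dvd' hle).mp hQ)
      rw [hlcm] at d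
      have h0 : s₂ - s₁ = 0 := by
        by_contra hne0
        exact absurd (Nat.le_of_dvd (by omega) d) (by omega)
      omega
    intro s₁ s₂ h1 h2 hP hQ
    rcases le_total s₁ s₂ with hle | hle
    · exact main2 s₁ s₂ hle h2 hP hQ
    · exact (main2 s₂ s₁ hle h1 hP.symm hQ.symm).symm
  -- membership characterization
  have hmem_iff : ∀ u i, i < 4 →
      ((u < p * q ∧ ¬ q ∣ u ∧ ¬ p ∣ u ∧ e u = i) ↔
        (u < p * q ∧ (u : ZMod (p * q)) ∈ D i)) := by
    intro u i hi4
    constructor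
    · rintro ⟨hu, hqu, hpu, hei⟩
      obtain ⟨j, hj4, hjD⟩ := cover u hpu hqu
      have hej := heD u hu j hj4 hjD
      refine ⟨hu, ?_⟩
      have hji : j = i := by rw [hej] at hei; exact hei
      rwa [hji] at hjD
    · rintro ⟨hu, hDi⟩
      have hei := heD u hu i hi4 hDi
      rw [hD i] at hDi
      obtain ⟨s, hs, hx⟩ := hDi
      have hmod : u ≡ g ^ s * h ^ i [MOD p * q] := by
        rw [← ZMod.natCast_eq_natCast_iff]
        push_cast
        exact hx
      have hpu : ¬ p ∣ u := by
        intro hd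
        have h1 : u ≡ g ^ s * h ^ i [MOD p] := Nat.ModEq.of_dvd (dvd_mul_right p q) hmod
        have h2 : p ∣ g ^ s * h ^ i :=
          (Nat.modEq_zero_iff_dvd).mp (h1.symm.trans ((Nat.modEq_zero_iff_dvd).mpr hd))
        rcases (Nat.Prime.dvd_mul hp).mp h2 with h3 | h3
        · exact hpg (hp.dvd_of_dvd_pow h3)
        · exact hph (hp.dvd_of_dvd_pow h3)
      have hqu : ¬ q ∣ u := by
        intro hd
        have h1 : u ≡ g ^ s * h ^ i [MOD q] := Nat.ModEq.of_dvd (dvd_mul_left q p) hmod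
        have h2 : q ∣ g ^ s * h ^ i :=
          (Nat.modEq_zero_iff_dvd).mp (h1.symm.trans ((Nat.modEq_zero_iff_dvd).mpr hd))
        rcases (Nat.Prime.dvd_mul hq).mp h2 with h3 | h3
        · exact hqg (hq.dvd_of_dvd_pow h3)
        · exact hqh (hq.dvd_of_dvd_pow h3)
      exact ⟨hu, hqu, hpu, hei⟩
  -- the inner sum over one class
  set T : ℕ := ∑ j ∈ Ico 1 q, 4 ^ j with hT
  have hval4 : ∀ s : ℕ, g ^ s % q = ((g : ZMod q) ^ s).val := by
    intro s
    have h1 : ((g ^ s : ℕ) : ZMod q) = (g : ZMod q) ^ s := by push_cast; ring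
    rw [← h1, ZMod.val_natCast]
  have hinjq : ∀ x ∈ range (q - 1), ∀ y ∈ range (q - 1),
      ((g : ZMod q) ^ x).val = ((g : ZMod q) ^ y).val → x = y := by
    intro x hx y hy hxy
    rw [Finset.mem_range] at hx hy
    have h1 := ZMod.val_injective q hxy
    have h2 := (pow_eq_pow_iff_field hq _ hgq0).mp h1
    rw [hgq] at h2
    exact h2.eq_of_lt_of_lt hx hy
  have base_sum : (∑ s ∈ range (q - 1), 4 ^ (g ^ s % q)) = T := by
    have himg : (range (q - 1)).image (fun s => ((g : ZMod q) ^ s).val) = Ico 1 q := by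
      apply Finset.eq_of_subset_of_card_le
      · intro x hx
        obtain ⟨s, hs, rfl⟩ := Finset.mem_image.mp hx
        rw [Finset.mem_Ico]
        have hne0 : (g : ZMod q) ^ s ≠ 0 := pow_ne_zero _ hgq0
        have hv0 : ((g : ZMod q) ^ s).val ≠ 0 := fun h0 => hne0 ((ZMod.val_eq_zero _).mp h0)
        exact ⟨by omega, ZMod.val_lt _⟩
      · rw [Finset.card_image_of_injOn (fun x hx y hy => hinjq x (by simpa using hx) y (by simpa using hy)),
          Finset.card_range, Nat.card_Ico]
    calc (∑ s ∈ range (q - 1), 4 ^ (g ^ s % q))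
        = ∑ s ∈ range (q - 1), 4 ^ (((g : ZMod q) ^ s).val) := by
          refine Finset.sum_congr rfl fun s _ => ?_
          rw [hval4]
      _ = ∑ x ∈ Ico 1 q, 4 ^ x := by rw [← himg, Finset.sum_image hinjq]
      _ = T := hT.symm
  have class_sum : ∀ i < 4,
      (∑ u ∈ ((range (p * q)).filter (fun u => ¬ q ∣ u ∧ ¬ p ∣ u ∧ e u = i)), 4 ^ (u % q))
        = k * T := by
    intro i hi4
    have hpqpos : 0 < p * q := Nat.mul_pos hp.pos hq.pos
    have hinjL : ∀ x ∈ range L, ∀ y ∈ range L,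
        (g ^ x * h ^ i) % (p * q) = (g ^ y * h ^ i) % (p * q) → x = y := by
      intro x hx y hy hxy
      rw [Finset.mem_range] at hx hy
      have hmod : g ^ x * h ^ i ≡ g ^ y * h ^ i [MOD p * q] := hxy
      have hmp := Nat.ModEq.of_dvd (dvd_mul_right p q) hmod
      have hmq := Nat.ModEq.of_dvd (dvd_mul_left q p) hmod
      have hzp : (g : ZMod p) ^ (x + i) = (g : ZMod p) ^ (y + i) := by
        have h1 := (ZMod.natCast_eq_natCast_iff _ _ p).mpr hmp
        push_cast at h1
        rw [hhzp] at h1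
        rw [pow_add, pow_add]
        exact h1
      have hP : x ≡ y [MOD p - 1] := by
        have h2 := (pow_eq_pow_iff_field hp _ hgp0).mp hzp
        rw [hgp] at h2
        exact Nat.ModEq.add_right_cancel' i h2
      have hzq : (g : ZMod q) ^ x = (g : ZMod q) ^ y := by
        have h1 := (ZMod.natCast_eq_natCast_iff _ _ q).mpr hmq
        push_cast at h1
        rw [hhzq] at h1
        simpa using h1
      have hQ : x ≡ y [MOD q - 1] := by
        have h2 := (pow_eq_pow_iff_field hq _ hgq0).mp hzq
        rw [hgq] at h2
        exact h2
      exact injL x y hx hy hP hQ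
    have hfilter_eq : (range (p * q)).filter (fun u => ¬ q ∣ u ∧ ¬ p ∣ u ∧ e u = i)
        = (range L).image (fun s => (g ^ s * h ^ i) % (p * q)) := by
      ext u
      simp only [Finset.mem_filter, Finset.mem_range, Finset.mem_image]
      constructor
      · rintro ⟨hu, hqu, hpu, hei⟩
        have hDi := ((hmem_iff u i hi4).mp ⟨hu, hqu, hpu, hei⟩).2
        rw [hD i] at hDi
        obtain ⟨s, hs, hx⟩ := hDi
        refine ⟨s, hs, ?_⟩
        have hmod : (g ^ s * h ^ i) ≡ u [MOD p * q] := by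
          rw [← ZMod.natCast_eq_natCast_iff]
          push_cast
          exact hx.symm
        have h1 : (g ^ s * h ^ i) % (p * q) = u % (p * q) := hmod
        rw [h1, Nat.mod_eq_of_lt hu]
      · rintro ⟨s, hs, rfl⟩
        have hvD : (((g ^ s * h ^ i) % (p * q) : ℕ) : ZMod (p * q)) ∈ D i := by
          rw [hD i]
          refine ⟨s, hs, ?_⟩
          rw [ZMod.natCast_mod]
          push_cast
          ring
        have hlt : (g ^ s * h ^ i) % (p * q) < p * q := Nat.mod_lt _ hpqpos
        have := (hmem_iff _ i hi4).mpr ⟨hlt, hvD⟩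
        exact ⟨this.1, this.2.1, this.2.2.1, this.2.2.2⟩
    rw [hfilter_eq, Finset.sum_image hinjL]
    have hterm : ∀ s : ℕ, (g ^ s * h ^ i) % (p * q) % q = g ^ s % q := by
      intro s
      rw [Nat.mod_mod_of_dvd _ (dvd_mul_left q p)]
      have h1 : g ^ s * h ^ i ≡ g ^ s * 1 ^ i [MOD q] := (Nat.ModEq.refl _).mul (hhq.pow i)
      simpa [Nat.ModEq] using h1
    simp only [hterm]
    rw [hLk, sum_periodic_nat (fun s => 4 ^ (g ^ s % q)) (q - 1) ?per k, base_sum]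
    case per =>
      intro s
      have hz : (g : ZMod q) ^ (s + (q - 1)) = (g : ZMod q) ^ s := by
        rw [pow_add, ← hgq, pow_orderOf_eq_one, mul_one]
      have hmod : (g ^ (s + (q - 1)) : ℕ) ≡ g ^ s [MOD q] := by
        rw [← ZMod.natCast_eq_natCast_iff]
        push_cast
        exact hz
      have h1 : g ^ (s + (q - 1)) % q = g ^ s % q := hmod
      simp only [h1]
  -- sum over multiples of q
  have q_sum : (∑ u ∈ ((range (p * q)).filter (fun u => q ∣ u)), e u * 4 ^ (u % q)) = 2 * p := by
    have himg : (range (p * q)).filter (fun u => q ∣ u) = (range p).image (fun j => j * q) := by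
      ext u
      simp only [Finset.mem_filter, Finset.mem_range, Finset.mem_image]
      constructor
      · rintro ⟨hu, c, rfl⟩
        refine ⟨c, ?_, mul_comm c q⟩
        rw [mul_comm p q] at hu
        exact Nat.lt_of_mul_lt_mul_left hu
      · rintro ⟨j, hj, rfl⟩
        exact ⟨(Nat.mul_lt_mul_right hq.pos).mpr hj, ⟨j, mul_comm j q⟩⟩
    rw [himg, Finset.sum_image (fun x _ y _ hxy => Nat.eq_of_mul_eq_mul_right hq.pos hxy)]
    have hterm : ∀ j ∈ range p, e (j * q) * 4 ^ (j * q % q) = 2 := by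
      intro j hj
      rw [Finset.mem_range] at hj
      rw [he2 (j * q) ((Nat.mul_lt_mul_right hq.pos).mpr hj) ⟨j, mul_comm j q⟩,
        Nat.mul_mod_left]
      norm_num
    rw [Finset.sum_congr rfl hterm, Finset.sum_const, Finset.card_range, smul_eq_mul]
    ring
  -- total modular sum
  have total : (∑ u ∈ range (p * q), e u * 4 ^ (u % q)) = 2 * p + 6 * (k * T) := by
    rw [← Finset.sum_filter_add_sum_filter_not (range (p * q)) (fun u => q ∣ u)
      (fun u => e u * 4 ^ (u % q)), q_sum]
    congr 1
    rw [← Finset.sum_filter_add_sum_filter_not ((range (p * q)).filter (fun u => ¬ q ∣ u))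
      (fun u => p ∣ u) (fun u => e u * 4 ^ (u % q))]
    have hB : (∑ u ∈ (((range (p * q)).filter (fun u => ¬ q ∣ u)).filter (fun u => p ∣ u)),
        e u * 4 ^ (u % q)) = 0 := by
      apply Finset.sum_eq_zero
      intro u hu
      simp only [Finset.mem_filter, Finset.mem_range] at hu
      rw [he0 u hu.1.1 hu.2 hu.1.2]
      exact zero_mul _
    rw [hB, zero_add]
    set C := ((range (p * q)).filter (fun u => ¬ q ∣ u)).filter (fun u => ¬ p ∣ u) with hC
    have hmapsto : ∀ u ∈ C, e u ∈ range 4 := by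
      intro u hu
      simp only [hC, Finset.mem_filter, Finset.mem_range] at hu
      obtain ⟨i, hi4, hiD⟩ := cover u hu.2 hu.1.2
      rw [Finset.mem_range, heD u hu.1.1 i hi4 hiD]
      exact hi4
    rw [← Finset.sum_fiberwise_of_maps_to hmapsto (fun u => e u * 4 ^ (u % q))]
    have hfib : ∀ i ∈ range 4,
        (∑ u ∈ C.filter (fun u => e u = i), e u * 4 ^ (u % q)) = i * (k * T) := by
      intro i hi
      rw [Finset.mem_range] at hi
      have h1 : ∀ u ∈ C.filter (fun u => e u = i), e u * 4 ^ (u % q) = i * 4 ^ (u % q) := by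
        intro u hu
        rw [(Finset.mem_filter.mp hu).2]
      have hCeq : C.filter (fun u => e u = i)
          = (range (p * q)).filter (fun u => ¬ q ∣ u ∧ ¬ p ∣ u ∧ e u = i) := by
        rw [hC, Finset.filter_filter, Finset.filter_filter]
      rw [Finset.sum_congr rfl h1, ← Finset.mul_sum, hCeq, class_sum i hi]
    rw [Finset.sum_congr rfl hfib, Finset.sum_range_succ, Finset.sum_range_succ,
      Finset.sum_range_succ, Finset.sum_range_succ, Finset.sum_range_zero]
    ring
  -- step A
  have stepA : (∑ u ∈ range (p * q), e u * 4 ^ u) ≡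
      (∑ u ∈ range (p * q), e u * 4 ^ (u % q)) [MOD 4 ^ q - 1] := by
    apply modEq_sum
    intro u _
    apply Nat.ModEq.mul_left
    conv_lhs => rw [← Nat.div_add_mod u q]
    rw [pow_add, pow_mul]
    have h1 : ((4 : ℕ) ^ q) ^ (u / q) ≡ 1 ^ (u / q) [MOD 4 ^ q - 1] :=
      Nat.ModEq.pow _ (((Nat.modEq_iff_dvd' (Nat.one_le_pow _ _ (by norm_num))).mpr
        (dvd_refl _)).symm)
    simpa using h1.mul_right (4 ^ (u % q))
  have h4q : 3 * T + 4 = 4 ^ q := by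
    have h0 : (∑ j ∈ range q, 4 ^ j) = 1 + T := by
      rw [Finset.range_eq_Ico, Finset.sum_eq_sum_Ico_succ_bot hq.pos]
      simp [hT]
    have := geom3 q
    rw [h0] at this
    omega
  have main : (∑ u ∈ range (p * q), e u * 4 ^ u) ≡ (p + 3) / 2 [MOD 4 ^ q - 1] := by
    have heq : 2 * p + 6 * (k * T) = 2 * k * (4 ^ q - 1) + (2 * k + 2) := by
      have h1 : 4 ^ q - 1 = 3 * T + 3 := by omega
      rw [h1, hk]; ring
    have hval : (p + 3) / 2 = 2 * k + 2 := by omega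
    rw [hval]
    refine stepA.trans ?_
    rw [total, heq]
    have : 2 * k * (4 ^ q - 1) + (2 * k + 2) ≡ 0 + (2 * k + 2) [MOD 4 ^ q - 1] :=
      Nat.ModEq.add_right _ ((Nat.modEq_zero_iff_dvd).mpr ⟨2 * k, mul_comm _ _⟩)
    simpa using this
  refine ⟨main, ?_⟩
  -- gcd part
  have hval : (p + 3) / 2 = 2 * k + 2 := by omega
  have h4ge : (4 : ℕ) ≤ 4 ^ q := by
    calc (4 : ℕ) = 4 ^ 1 := (pow_one 4).symm
    _ ≤ 4 ^ q := Nat.pow_le_pow_right (by norm_num) hq.one_lt.le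
  have h3M : 3 ∣ 4 ^ q - 1 := by
    have h1 : (4 : ℕ) ^ q ≡ 1 ^ q [MOD 3] := Nat.ModEq.pow _ (by decide)
    rw [one_pow] at h1
    exact (Nat.modEq_iff_dvd' (by omega)).mp h1.symm
  have h9M : ¬ (9 : ℕ) ∣ 4 ^ q - 1 := by
    have h3q : ¬ 3 ∣ q := by
      intro hd
      rcases (hq.eq_one_or_self_of_dvd 3 hd) with h1 | h1 <;> omega
    have hmod : 4 ^ q % 9 = 4 ^ (q % 3) % 9 := by
      conv_lhs => rw [← Nat.div_add_mod q 3]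
      rw [pow_add, pow_mul]
      have h1 : ((4 : ℕ) ^ 3) ^ (q / 3) ≡ 1 ^ (q / 3) [MOD 9] := Nat.ModEq.pow _ (by decide)
      rw [one_pow] at h1
      have h2 := h1.mul_right (4 ^ (q % 3))
      rw [one_mul] at h2
      exact h2
    have hq3 : q % 3 = 1 ∨ q % 3 = 2 := by omega
    have hval9 : 4 ^ q % 9 = 4 ∨ 4 ^ q % 9 = 7 := by
      rcases hq3 with h1 | h1 <;> rw [hmod, h1] <;> norm_num
    omega
  have main' : (∑ u ∈ range (p * q), e u * 4 ^ u) ≡ 2 * k + 2 [MOD 4 ^ q - 1] := by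
    rw [← hval]; exact main
  have hMdvd : (4 ^ q - 1) / 3 ∣ 4 ^ q - 1 := Nat.div_dvd_of_dvd h3M
  have hmE : (∑ u ∈ range (p * q), e u * 4 ^ u) ≡ 2 * k + 2 [MOD (4 ^ q - 1) / 3] :=
    Nat.ModEq.of_dvd hMdvd main'
  have g1 : Nat.gcd (∑ u ∈ range (p * q), e u * 4 ^ u) ((4 ^ q - 1) / 3)
      = Nat.gcd (2 * k + 2) ((4 ^ q - 1) / 3) := hmE.gcd_eq
  have h3k : ¬ 3 ∣ (2 * k + 2) := by
    intro hd
    have h3p : (3 : ℕ) ∣ p := by omega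
    rcases hp.eq_one_or_self_of_dvd 3 h3p with h1 | h1 <;> omega
  have hc3 : Nat.Coprime 3 (2 * k + 2) :=
    (Nat.Prime.coprime_iff_not_dvd (by norm_num)).mpr h3k
  have hMm : 4 ^ q - 1 = 3 * ((4 ^ q - 1) / 3) := (Nat.mul_div_cancel' h3M).symm
  have g2 : Nat.gcd (2 * k + 2) ((4 ^ q - 1) / 3) = Nat.gcd (2 * k + 2) (4 ^ q - 1) := by
    conv_rhs => rw [hMm]
    rw [Nat.Coprime.gcd_mul_left_cancel_right ((4 ^ q - 1) / 3) hc3]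
  have hModd : ¬ 2 ∣ (4 ^ q - 1) := by
    have h2 : (2 : ℕ) ∣ 4 ^ q := dvd_pow (by norm_num) (by omega)
    omega
  have g3 : Nat.gcd (4 ^ q - 1) (p + 3) = Nat.gcd (2 * k + 2) (4 ^ q - 1) := by
    rw [Nat.gcd_comm]
    have hp3 : p + 3 = 2 * (2 * k + 2) := by omega
    rw [hp3, Nat.Coprime.gcd_mul_left_cancel (2 * k + 2)
      ((Nat.prime_two.coprime_iff_not_dvd).mpr hModd)]
  rw [g1, g2, g3]
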